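/- arXiv:1912.09506 — 3 statements merged into one kernel-verified Lean document; each statement's English description precedes it below -/
import Mathlib

section
/- For every integer n ≥ 2, the function (t₁,…,t_n) ↦ (1/(1−t₁))·(1/t₂)·⋯·(1/t_n) is integrable on the ordered simplex {0 ≤ t₁ ≤ ⋯ ≤ t_n ≤ 1} ⊂ ℝⁿ and its integral over that simplex equals ζ(n), the value of the Riemann zeta function at n. -/
open MeasureTheory

/-- The ordered simplex `{0 ≤ t₁ ≤ ⋯ ≤ t_n ≤ 1} ⊆ ℝⁿ`. -/
def orderedSimplex (n : ℕ) : Set (Fin n → ℝ) :=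
  {t | Monotone t ∧ ∀ i, t i ∈ Set.Icc (0 : ℝ) 1}

open ENNReal Finset

lemma measurableSet_orderedSimplex (n : ℕ) : MeasurableSet (orderedSimplex n) := by
  have : orderedSimplex n =
      (⋂ (i : Fin n) (j : Fin n) (_ : i ≤ j), {t : Fin n → ℝ | t i ≤ t j}) ∩
        ⋂ (i : Fin n), {t : Fin n → ℝ | 0 ≤ t i ∧ t i ≤ 1} := by
    ext t
    simp only [orderedSimplex, Set.mem_setOf_eq, Set.mem_inter_iff, Set.mem_iInter,
      Set.mem_Icc, Monotone]
  rw [this]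
  refine MeasurableSet.inter ?_ ?_
  · exact MeasurableSet.iInter fun i => MeasurableSet.iInter fun j => MeasurableSet.iInter
      fun _ => measurableSet_le (measurable_pi_apply i) (measurable_pi_apply j)
  · exact MeasurableSet.iInter fun i => MeasurableSet.inter
      (measurableSet_le measurable_const (measurable_pi_apply i))
      (measurableSet_le (measurable_pi_apply i) measurable_const)

lemma prod_univ_erase_zero {m : ℕ} (f : Fin (m + 1) → ℝ) :
    ∏ i ∈ Finset.univ.erase (0 : Fin (m + 1)), f i = ∏ j : Fin m, f j.succ := by
  have h : Finset.univ.erase (0 : Fin (m + 1)) = Finset.Ioi 0 := by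
    ext i
    simp [Fin.pos_iff_ne_zero]
  rw [h, Fin.Ioi_zero_eq_map, Finset.prod_map]
  rfl

lemma cons_mem_orderedSimplex {n : ℕ} (x : ℝ) (y : Fin (n + 1) → ℝ) :
    Fin.cons x y ∈ orderedSimplex (n + 2) ↔
      y ∈ orderedSimplex (n + 1) ∧ x ∈ Set.Icc 0 (y 0) := by
  constructor
  · rintro ⟨hm, hb⟩
    have hmy : Monotone y := by
      intro j j' h
      have := hm (Fin.succ_le_succ_iff.2 h)
      simpa using this
    have hx0 : (0 : ℝ) ≤ x := by simpa using (hb 0).1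
    have hxy : x ≤ y 0 := by
      have := hm (Fin.zero_le (Fin.succ 0))
      simpa using this
    exact ⟨⟨hmy, fun j => by simpa using hb j.succ⟩, hx0, hxy⟩
  · rintro ⟨⟨hm, hb⟩, hx0, hxy⟩
    refine ⟨?_, ?_⟩
    · refine Fin.monotone_iff_le_succ.mpr ?_
      intro i
      refine Fin.cases ?_ ?_ i
      · simpa using hxy
      · intro j
        have h2 := Fin.monotone_iff_le_succ.mp hm j
        simpa [← Fin.succ_castSucc] using h2
    · intro i
      refine Fin.cases ?_ ?_ i
      · simpa using ⟨hx0, hxy.trans (hb 0).2⟩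
      · intro j
        simpa using hb j

lemma lintegral_pow_Icc (k : ℕ) {c : ℝ} (hc : 0 ≤ c) :
    ∫⁻ x in Set.Icc (0 : ℝ) c, ENNReal.ofReal (x ^ k) =
      ENNReal.ofReal (c ^ (k + 1) / (k + 1)) := by
  rw [← ofReal_integral_eq_lintegral_ofReal]
  · congr 1
    rw [MeasureTheory.integral_Icc_eq_integral_Ioc, ← intervalIntegral.integral_of_le hc,
      integral_pow]
    simp
  · exact (continuous_pow k).continuousOn.integrableOn_compact isCompact_Icc
  · filter_upwards [ae_restrict_mem measurableSet_Icc] with x hx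
    exact pow_nonneg hx.1 k

lemma lintegral_pow_mul_Icc (k : ℕ) {c C : ℝ} (hc : 0 ≤ c) :
    ∫⁻ x in Set.Icc (0 : ℝ) c, ENNReal.ofReal (x ^ k * C) =
      ENNReal.ofReal (c ^ (k + 1) / (k + 1)) * ENNReal.ofReal C := by
  have h1 : ∫⁻ x in Set.Icc (0 : ℝ) c, ENNReal.ofReal (x ^ k * C) =
      ∫⁻ x in Set.Icc (0 : ℝ) c, ENNReal.ofReal (x ^ k) * ENNReal.ofReal C := by
    refine setLIntegral_congr_fun measurableSet_Icc ?_
    intro x hx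
    exact ENNReal.ofReal_mul (pow_nonneg hx.1 k)
  rw [h1, lintegral_mul_const _ (by fun_prop), lintegral_pow_Icc k hc]

/-- Key computation: the integral of `t₀^k / (t₁ ⋯ t_{n}) ` over the ordered simplex. -/
lemma key_lintegral (k : ℕ) : ∀ n : ℕ,
    ∫⁻ t in orderedSimplex (n + 1),
      ENNReal.ofReal ((t 0) ^ k * ∏ i ∈ Finset.univ.erase (0 : Fin (n + 1)), (t i)⁻¹) =
    ENNReal.ofReal ((1 / (k + 1 : ℝ)) ^ (n + 1)) := by
  intro n
  induction n with
  | zero =>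
    have hprod : (Finset.univ.erase (0 : Fin 1)) = (∅ : Finset (Fin 1)) := rfl
    simp only [hprod, Finset.prod_empty, mul_one, pow_one]
    have hmeas : Measurable fun t : Fin 1 → ℝ =>
        (orderedSimplex 1).indicator (fun t => ENNReal.ofReal ((t 0) ^ k)) t :=
      Measurable.indicator (by fun_prop) (measurableSet_orderedSimplex 1)
    have hmp := (volume_preserving_funUnique (Fin 1) ℝ).symm _
    rw [← lintegral_indicator (measurableSet_orderedSimplex 1)]
    refine (hmp.lintegral_comp hmeas).symm.trans ?_
    have hmem : ∀ x : ℝ,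
        ((MeasurableEquiv.funUnique (Fin 1) ℝ).symm x ∈ orderedSimplex 1) ↔
          x ∈ Set.Icc (0 : ℝ) 1 := by
      intro x
      constructor
      · intro h
        exact h.2 0
      · intro h
        exact ⟨Subsingleton.monotone _, fun i => h⟩
    have hcong : ∀ x : ℝ,
        (orderedSimplex 1).indicator (fun t => ENNReal.ofReal ((t 0) ^ k))
            ((MeasurableEquiv.funUnique (Fin 1) ℝ).symm x) =
          (Set.Icc (0 : ℝ) 1).indicator (fun x => ENNReal.ofReal (x ^ k)) x := by
      intro x
      by_cases h : x ∈ Set.Icc (0 : ℝ) 1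
      · rw [Set.indicator_of_mem ((hmem x).2 h), Set.indicator_of_mem h]
        rfl
      · rw [Set.indicator_of_notMem (fun hc => h ((hmem x).1 hc)),
          Set.indicator_of_notMem h]
    rw [lintegral_congr hcong, lintegral_indicator measurableSet_Icc,
      lintegral_pow_Icc k zero_le_one]
    norm_num
  | succ n ih =>
    set S := orderedSimplex (n + 2) with hS_def
    set S' := orderedSimplex (n + 1) with hS'_def
    set F : (Fin (n + 2) → ℝ) → ℝ≥0∞ := fun t =>
      ENNReal.ofReal ((t 0) ^ k * ∏ i ∈ Finset.univ.erase (0 : Fin (n + 2)), (t i)⁻¹)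
      with hF_def
    have hFmeas : Measurable F := by
      apply Measurable.ennreal_ofReal
      exact Measurable.mul ((measurable_pi_apply 0).pow_const k)
        (Finset.measurable_prod _ fun i _ => (measurable_pi_apply i).inv)
    have hSmeas := measurableSet_orderedSimplex (n + 2)
    have hindmeas : Measurable (S.indicator F) := hFmeas.indicator hSmeas
    set e := MeasurableEquiv.piFinSuccAbove (fun _ : Fin (n + 2) => ℝ) 0 with he_def
    have hmp := (volume_preserving_piFinSuccAbove (fun _ : Fin (n + 2) => ℝ) 0).symm _
    have he_symm : ∀ (x : ℝ) (y : Fin (n + 1) → ℝ), e.symm (x, y) = Fin.cons x y := by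
      intro x y
      exact Fin.insertNth_zero' x y
    have hFcons : ∀ (x : ℝ) (y : Fin (n + 1) → ℝ),
        F (Fin.cons x y) = ENNReal.ofReal (x ^ k * ∏ j : Fin (n + 1), (y j)⁻¹) := by
      intro x y
      simp only [hF_def, Fin.cons_zero]
      rw [prod_univ_erase_zero]
      simp only [Fin.cons_succ]
    calc ∫⁻ t in S, F t = ∫⁻ t, S.indicator F t := (lintegral_indicator hSmeas F).symm
      _ = ∫⁻ p : ℝ × (Fin (n + 1) → ℝ), S.indicator F (e.symm p) :=
          (hmp.lintegral_comp hindmeas).symm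
      _ = ∫⁻ y, ∫⁻ x, S.indicator F (e.symm (x, y)) := by
          rw [MeasureTheory.Measure.volume_eq_prod]
          exact lintegral_prod_symm _ ((hindmeas.comp e.symm.measurable).aemeasurable)
      _ = ∫⁻ y, S'.indicator (fun y =>
            ENNReal.ofReal ((y 0) ^ (k + 1) / (k + 1)) *
              ENNReal.ofReal (∏ j : Fin (n + 1), (y j)⁻¹)) y := by
          refine lintegral_congr fun y => ?_
          by_cases hy : y ∈ S'
          · have hinner : ∀ x : ℝ, S.indicator F (e.symm (x, y)) =
                (Set.Icc (0 : ℝ) (y 0)).indicator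
                  (fun x => ENNReal.ofReal (x ^ k * ∏ j : Fin (n + 1), (y j)⁻¹)) x := by
              intro x
              rw [he_symm]
              by_cases hx : x ∈ Set.Icc (0 : ℝ) (y 0)
              · rw [Set.indicator_of_mem ((cons_mem_orderedSimplex x y).2 ⟨hy, hx⟩),
                  Set.indicator_of_mem hx, hFcons]
              · rw [Set.indicator_of_notMem
                  (fun hc => hx ((cons_mem_orderedSimplex x y).1 hc).2),
                  Set.indicator_of_notMem hx]
            rw [Set.indicator_of_mem hy]
            simp only [hinner]
            rw [lintegral_indicator measurableSet_Icc,
              lintegral_pow_mul_Icc k (hy.2 0).1]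
          · have hzero : ∀ x : ℝ, S.indicator F (e.symm (x, y)) = 0 := by
              intro x
              rw [he_symm]
              exact Set.indicator_of_notMem
                (fun hc => hy ((cons_mem_orderedSimplex x y).1 hc).1) _
            rw [Set.indicator_of_notMem hy]
            simp only [hzero, lintegral_zero]
      _ = ∫⁻ y in S', ENNReal.ofReal ((y 0) ^ (k + 1) / (k + 1)) *
            ENNReal.ofReal (∏ j : Fin (n + 1), (y j)⁻¹) :=
          lintegral_indicator (measurableSet_orderedSimplex (n + 1)) _
      _ = ∫⁻ y in S', ENNReal.ofReal (1 / (k + 1 : ℝ)) *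
            ENNReal.ofReal ((y 0) ^ k * ∏ i ∈ Finset.univ.erase (0 : Fin (n + 1)), (y i)⁻¹) := by
          refine lintegral_congr_ae ?_
          have h1 : ∀ᵐ y : Fin (n + 1) → ℝ ∂volume, y 0 ≠ 0 := by
            rw [MeasureTheory.volume_pi]
            exact Measure.ae_eval_ne _ 0 0
          filter_upwards [ae_restrict_mem (measurableSet_orderedSimplex (n + 1)),
            ae_restrict_of_ae h1] with y hy h0
          have hy0 : (0 : ℝ) ≤ y 0 := (hy.2 0).1
          have hsplit : ∏ j : Fin (n + 1), (y j)⁻¹ =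
              (y 0)⁻¹ * ∏ i ∈ Finset.univ.erase (0 : Fin (n + 1)), (y i)⁻¹ :=
            (Finset.mul_prod_erase Finset.univ _ (Finset.mem_univ 0)).symm
          rw [← ENNReal.ofReal_mul (by positivity), ← ENNReal.ofReal_mul (by positivity)]
          congr 1
          rw [hsplit]
          have h2 : (y 0) ^ (k + 1) / (k + 1) * ((y 0)⁻¹ *
              ∏ i ∈ Finset.univ.erase (0 : Fin (n + 1)), (y i)⁻¹) =
              1 / (k + 1) * ((y 0) ^ (k + 1) * (y 0)⁻¹ *
                ∏ i ∈ Finset.univ.erase (0 : Fin (n + 1)), (y i)⁻¹) := by ring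
          rw [h2, pow_succ, mul_assoc ((y 0) ^ k), mul_inv_cancel₀ h0, mul_one]
      _ = ENNReal.ofReal (1 / (k + 1 : ℝ)) * ∫⁻ y in S',
            ENNReal.ofReal ((y 0) ^ k * ∏ i ∈ Finset.univ.erase (0 : Fin (n + 1)), (y i)⁻¹) := by
          refine lintegral_const_mul _ ?_
          apply Measurable.ennreal_ofReal
          exact Measurable.mul ((measurable_pi_apply 0).pow_const k)
            (Finset.measurable_prod _ fun i _ => (measurable_pi_apply i).inv)
      _ = ENNReal.ofReal (1 / (k + 1 : ℝ)) * ENNReal.ofReal ((1 / (k + 1 : ℝ)) ^ (n + 1)) := by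
          rw [ih]
      _ = ENNReal.ofReal ((1 / (k + 1 : ℝ)) ^ (n + 1 + 1)) := by
          rw [← ENNReal.ofReal_mul (by positivity), ← pow_succ']

/-- For every integer `n ≥ 2`, the function
`(t₁,…,t_n) ↦ (1/(1−t₁))·(1/t₂)·⋯·(1/t_n)` is integrable on the ordered
simplex `{0 ≤ t₁ ≤ ⋯ ≤ t_n ≤ 1}` and its integral equals `ζ(n)`. -/
theorem zeta_as_iterated_integral (n : ℕ) (hn : 2 ≤ n) :
    IntegrableOn
      (fun t : Fin n → ℝ =>
        (1 - (t ⟨0, by omega⟩ : ℂ))⁻¹ *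
          ∏ i ∈ Finset.univ.erase (⟨0, by omega⟩ : Fin n), ((t i : ℂ))⁻¹)
      (orderedSimplex n) volume ∧
    (∫ t in orderedSimplex n,
        (1 - (t ⟨0, by omega⟩ : ℂ))⁻¹ *
          ∏ i ∈ Finset.univ.erase (⟨0, by omega⟩ : Fin n), ((t i : ℂ))⁻¹)
      = riemannZeta n := by
  obtain ⟨m, rfl⟩ : ∃ m, n = m + 2 := ⟨n - 2, by omega⟩
  set gR : (Fin (m + 2) → ℝ) → ℝ := fun t =>
    (1 - t 0)⁻¹ * ∏ i ∈ Finset.univ.erase (0 : Fin (m + 2)), (t i)⁻¹ with hgR_def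
  have hcast : (fun t : Fin (m + 2) → ℝ =>
      (1 - (t ⟨0, by omega⟩ : ℂ))⁻¹ *
        ∏ i ∈ Finset.univ.erase (⟨0, by omega⟩ : Fin (m + 2)), ((t i : ℂ))⁻¹) =
      fun t => ((gR t : ℝ) : ℂ) := by
    funext t
    simp only [hgR_def, Fin.zero_eta]
    push_cast
    ring
  have hmeasR : Measurable gR := by
    apply Measurable.mul (((measurable_const.sub (measurable_pi_apply 0)).inv))
    exact Finset.measurable_prod _ fun i _ => (measurable_pi_apply i).inv
  have hSmeas := measurableSet_orderedSimplex (m + 2)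
  have hsum : Summable fun k : ℕ => (1 / (k + 1 : ℝ)) ^ (m + 2) := by
    have h1 : Summable fun j : ℕ => 1 / (j : ℝ) ^ (m + 2) :=
      Real.summable_one_div_nat_pow.mpr (by omega)
    have h2 := (summable_nat_add_iff 1).mpr h1
    refine h2.congr fun k => ?_
    push_cast
    rw [div_pow, one_pow]
  have htsum_nonneg : 0 ≤ ∑' k : ℕ, (1 / (k + 1 : ℝ)) ^ (m + 2) :=
    tsum_nonneg fun k => by positivity
  have hnonneg : ∀ t ∈ orderedSimplex (m + 2), 0 ≤ gR t := by
    intro t ht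
    have h1 : (0 : ℝ) ≤ (1 - t 0)⁻¹ := inv_nonneg.2 (by linarith [(ht.2 0).2])
    have h2 : (0 : ℝ) ≤ ∏ i ∈ Finset.univ.erase (0 : Fin (m + 2)), (t i)⁻¹ :=
      Finset.prod_nonneg fun i _ => inv_nonneg.2 (ht.2 i).1
    exact mul_nonneg h1 h2
  have hae_nonneg : 0 ≤ᵐ[volume.restrict (orderedSimplex (m + 2))] gR := by
    filter_upwards [ae_restrict_mem hSmeas] with t ht using hnonneg t ht
  have hlint : ∫⁻ t in orderedSimplex (m + 2), ENNReal.ofReal (gR t) =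
      ENNReal.ofReal (∑' k : ℕ, (1 / (k + 1 : ℝ)) ^ (m + 2)) := by
    have hae : ∀ᵐ t ∂(volume.restrict (orderedSimplex (m + 2))),
        ENNReal.ofReal (gR t) = ∑' k : ℕ, ENNReal.ofReal
          ((t 0) ^ k * ∏ i ∈ Finset.univ.erase (0 : Fin (m + 2)), (t i)⁻¹) := by
      have h1 : ∀ᵐ t : Fin (m + 2) → ℝ ∂volume, t 0 ≠ 1 := by
        rw [MeasureTheory.volume_pi]
        exact Measure.ae_eval_ne _ 0 1
      filter_upwards [ae_restrict_mem hSmeas, ae_restrict_of_ae h1] with t ht hne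
      have hx0 : (0 : ℝ) ≤ t 0 := (ht.2 0).1
      have hx1 : t 0 < 1 := lt_of_le_of_ne (ht.2 0).2 hne
      have hP : (0 : ℝ) ≤ ∏ i ∈ Finset.univ.erase (0 : Fin (m + 2)), (t i)⁻¹ :=
        Finset.prod_nonneg fun i _ => inv_nonneg.2 (ht.2 i).1
      rw [hgR_def]
      rw [ENNReal.ofReal_mul (inv_nonneg.2 (by linarith : (0:ℝ) ≤ 1 - t 0))]
      rw [← tsum_geometric_of_lt_one hx0 hx1,
        ENNReal.ofReal_tsum_of_nonneg (fun k => pow_nonneg hx0 k)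
          (summable_geometric_of_lt_one hx0 hx1), ← ENNReal.tsum_mul_right]
      refine tsum_congr fun k => ?_
      rw [← ENNReal.ofReal_mul (pow_nonneg hx0 k)]
    rw [lintegral_congr_ae hae, lintegral_tsum]
    · have : ∀ k : ℕ, ∫⁻ t in orderedSimplex (m + 2), ENNReal.ofReal
          ((t 0) ^ k * ∏ i ∈ Finset.univ.erase (0 : Fin (m + 2)), (t i)⁻¹) =
          ENNReal.ofReal ((1 / (k + 1 : ℝ)) ^ (m + 2)) := fun k => key_lintegral k (m + 1)
      simp only [this]
      exact (ENNReal.ofReal_tsum_of_nonneg (fun k => pow_nonneg (by positivity) _) hsum).symm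
    · intro k
      apply Measurable.aemeasurable
      apply Measurable.ennreal_ofReal
      exact Measurable.mul ((measurable_pi_apply 0).pow_const k)
        (Finset.measurable_prod _ fun i _ => (measurable_pi_apply i).inv)
  have hIntR : IntegrableOn gR (orderedSimplex (m + 2)) volume := by
    refine ⟨hmeasR.aestronglyMeasurable, ?_⟩
    rw [hasFiniteIntegral_iff_ofReal hae_nonneg, hlint]
    exact ENNReal.ofReal_lt_top
  have hIntegral : ∫ t in orderedSimplex (m + 2), gR t =
      ∑' k : ℕ, (1 / (k + 1 : ℝ)) ^ (m + 2) := by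
    rw [integral_eq_lintegral_of_nonneg_ae hae_nonneg
      hmeasR.aestronglyMeasurable.restrict, hlint, ENNReal.toReal_ofReal htsum_nonneg]
  have hzeta : riemannZeta ((m + 2 : ℕ) : ℂ) =
      ((∑' k : ℕ, (1 / (k + 1 : ℝ)) ^ (m + 2) : ℝ) : ℂ) := by
    rw [zeta_nat_eq_tsum_of_gt_one (by omega : 1 < m + 2)]
    have h0 : ∑' j : ℕ, 1 / (j : ℝ) ^ (m + 2) =
        ∑' k : ℕ, (1 / (k + 1 : ℝ)) ^ (m + 2) := by
      have h1 : Summable fun j : ℕ => 1 / (j : ℝ) ^ (m + 2) :=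
        Real.summable_one_div_nat_pow.mpr (by omega)
      rw [Summable.tsum_eq_zero_add h1]
      have hz : (1 : ℝ) / ((0 : ℕ) : ℝ) ^ (m + 2) = 0 := by norm_num
      rw [hz, zero_add]
      refine tsum_congr fun k => ?_
      push_cast
      rw [div_pow, one_pow]
    rw [← h0, Complex.ofReal_tsum]
    refine tsum_congr fun j => ?_
    push_cast
    ring
  constructor
  · rw [hcast]
    exact hIntR.ofReal
  · rw [hcast]
    have hoi : (∫ t in orderedSimplex (m + 2), ((gR t : ℝ) : ℂ)) =
        ((∫ t in orderedSimplex (m + 2), gR t : ℝ) : ℂ) := integral_ofReal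
    rw [hoi, hIntegral]
    exact hzeta.symm
end

section
/- For every integer n ≥ 1 and every real number x with 0 < x < 1, the integral of (t₁,…,t_n) ↦ (1/(1−t₁))·∏_{i=2}^{n}(1/t_i) over the ordered simplex {0 ≤ t₁ ≤ ⋯ ≤ t_n ≤ x} equals the convergent series ∑_{k=1}^{∞} x^k / k^n (the classical polylogarithm Li_n(x)). -/
open MeasureTheory
open scoped ENNReal

/-- The ordered simplex `{0 ≤ t₁ ≤ ⋯ ≤ t_n ≤ x} ⊆ ℝⁿ`. -/
def orderedSimplexTo (n : ℕ) (x : ℝ) : Set (Fin n → ℝ) :=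
  {t | Monotone t ∧ ∀ i, t i ∈ Set.Icc (0 : ℝ) x}

namespace PolylogAux

noncomputable def H (n : ℕ) (t : Fin (n + 1) → ℝ) : ℝ :=
  (1 - t 0)⁻¹ * ∏ i ∈ Finset.univ.erase 0, (t i)⁻¹

lemma measurable_H (n : ℕ) : Measurable (H n) :=
  ((measurable_const.sub (measurable_pi_apply 0)).inv).mul
    (Finset.measurable_prod _ fun i _ => (measurable_pi_apply i).inv)

lemma measurableSet_monotone (n : ℕ) : MeasurableSet {t : Fin n → ℝ | Monotone t} := by
  have h : {t : Fin n → ℝ | Monotone t}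
      = ⋂ (i) (j) (_ : i ≤ j), {t : Fin n → ℝ | t i ≤ t j} := by
    ext t; simp [Monotone, Set.mem_iInter]
  rw [h]
  exact MeasurableSet.iInter fun i => MeasurableSet.iInter fun j => MeasurableSet.iInter fun _ =>
    measurableSet_le (measurable_pi_apply i) (measurable_pi_apply j)

lemma measurableSet_simplex (n : ℕ) (x : ℝ) : MeasurableSet (orderedSimplexTo n x) := by
  have h : orderedSimplexTo n x
      = {t : Fin n → ℝ | Monotone t} ∩ ⋂ i, (fun t : Fin n → ℝ => t i) ⁻¹' Set.Icc 0 x := by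
    ext t; simp [orderedSimplexTo, Set.mem_iInter]
  rw [h]
  exact (measurableSet_monotone n).inter
    (MeasurableSet.iInter fun i => measurable_pi_apply i measurableSet_Icc)

lemma prod_erase_eq_prod_ite {M : Type*} [CommMonoid M] {m : ℕ} (f : Fin (m + 1) → M) :
    ∏ i ∈ Finset.univ.erase 0, f i = ∏ i, (if i = 0 then 1 else f i) := by
  classical
  have h1 : ∏ i ∈ Finset.univ.erase 0, f i
      = ∏ i ∈ Finset.univ.erase 0, (if i = 0 then 1 else f i) :=
    Finset.prod_congr rfl fun i hi => (if_neg (Finset.ne_of_mem_erase hi)).symm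
  exact h1.trans (Finset.prod_erase Finset.univ (if_pos rfl))

lemma prod_split {M : Type*} [CommMonoid M] {n : ℕ} (g : Fin (n + 1 + 1) → M) :
    ∏ i ∈ Finset.univ.erase 0, g i
      = (∏ j ∈ Finset.univ.erase 0, g (Fin.castSucc j)) * g (Fin.last (n + 1)) := by
  classical
  rw [prod_erase_eq_prod_ite g, prod_erase_eq_prod_ite (fun j => g (Fin.castSucc j)),
    Fin.prod_univ_castSucc]
  congr 1
  exact Finset.prod_congr rfl fun j _ => by
    simp [Fin.castSucc_eq_zero_iff]

lemma H_split (n : ℕ) (t : Fin (n + 1 + 1) → ℝ) :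
    H (n + 1) t = (t (Fin.last (n + 1)))⁻¹ * H n (fun j => t (Fin.castSucc j)) := by
  unfold H
  rw [prod_split fun i => (t i)⁻¹]
  simp only [Fin.castSucc_zero]
  ring

lemma mem_simplex_succ_iff {n : ℕ} {x : ℝ} (t : Fin (n + 1) → ℝ) :
    t ∈ orderedSimplexTo (n + 1) x ↔
      t (Fin.last n) ∈ Set.Icc 0 x ∧
        (fun j => t (Fin.castSucc j)) ∈ orderedSimplexTo n (t (Fin.last n)) := by
  constructor
  · rintro ⟨hmono, hmem⟩
    refine ⟨hmem _, fun a b hab => hmono (Fin.castSucc_le_castSucc_iff.mpr hab),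
      fun j => ⟨(hmem _).1, hmono (Fin.le_last _)⟩⟩
  · rintro ⟨hlast, hmono', hmem'⟩
    constructor
    · intro i j hij
      induction j using Fin.lastCases with
      | last =>
        induction i using Fin.lastCases with
        | last => exact le_refl _
        | cast i' => exact (hmem' i').2
      | cast j' =>
        induction i using Fin.lastCases with
        | last => exact absurd hij (not_le.mpr (Fin.castSucc_lt_last j'))
        | cast i' => exact hmono' (Fin.castSucc_le_castSucc_iff.mp hij)
    · intro i
      induction i using Fin.lastCases with
      | last => exact hlast
      | cast i' => exact ⟨(hmem' i').1, le_trans (hmem' i').2 hlast.2⟩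

noncomputable def L (n : ℕ) (x : ℝ) : ℝ≥0∞ :=
  ∫⁻ t in orderedSimplexTo (n + 1) x, ENNReal.ofReal (H n t)

lemma lintegral_pow_Ioc (k : ℕ) {x : ℝ} (hx0 : 0 < x) :
    ∫⁻ s in Set.Ioc 0 x, ENNReal.ofReal (s ^ k)
      = ENNReal.ofReal (x ^ (k + 1) / ((k : ℝ) + 1)) := by
  rw [← ofReal_integral_eq_lintegral_ofReal ((continuous_pow k).integrableOn_Ioc)
    (Filter.eventually_of_mem (ae_restrict_mem measurableSet_Ioc)
      (fun s hs => pow_nonneg hs.1.le k))]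
  congr 1
  rw [← intervalIntegral.integral_of_le hx0.le, integral_pow]
  rw [zero_pow (Nat.succ_ne_zero k)]
  ring

lemma key_lintegral (p : ℕ) {x : ℝ} (hx0 : 0 < x) :
    ∫⁻ s in Set.Ioc 0 x, ∑' k : ℕ, ENNReal.ofReal (s ^ k / ((k : ℝ) + 1) ^ p)
      = ∑' k : ℕ, ENNReal.ofReal (x ^ (k + 1) / ((k : ℝ) + 1) ^ (p + 1)) := by
  rw [lintegral_tsum (f := fun (k : ℕ) (s : ℝ) => ENNReal.ofReal (s ^ k / ((k : ℝ) + 1) ^ p))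
    (fun k => (Measurable.ennreal_ofReal (by fun_prop)).aemeasurable)]
  refine tsum_congr fun k => ?_
  have hk : (0 : ℝ) < (k : ℝ) + 1 := by positivity
  have h1 : ∀ s : ℝ, ENNReal.ofReal (s ^ k / ((k : ℝ) + 1) ^ p)
      = ENNReal.ofReal ((((k : ℝ) + 1) ^ p)⁻¹) * ENNReal.ofReal (s ^ k) := by
    intro s
    rw [← ENNReal.ofReal_mul (by positivity)]
    congr 1
    field_simp
  simp_rw [h1]
  rw [lintegral_const_mul' _ _ ENNReal.ofReal_ne_top, lintegral_pow_Ioc k hx0,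
    ← ENNReal.ofReal_mul (by positivity)]
  congr 1
  rw [pow_succ]
  field_simp
  ring

lemma H_zero (t : Fin 1 → ℝ) : H 0 t = (1 - t 0)⁻¹ := by
  unfold H
  have h : (Finset.univ.erase 0 : Finset (Fin 1)) = ∅ := by
    apply Finset.eq_empty_of_forall_notMem
    intro i hi
    exact (Finset.ne_of_mem_erase hi) (Fin.eq_zero i)
  rw [h, Finset.prod_empty, mul_one]

lemma simplex_one (x : ℝ) :
    orderedSimplexTo 1 x = (fun t : Fin 1 → ℝ => t 0) ⁻¹' Set.Icc 0 x := by
  ext t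
  simp only [orderedSimplexTo, Set.mem_setOf_eq, Set.mem_preimage]
  constructor
  · rintro ⟨-, h⟩; exact h 0
  · intro h
    exact ⟨fun a b _ => le_of_eq (congrArg t (Subsingleton.elim a b)),
      fun i => by rw [Subsingleton.elim i 0]; exact h⟩

lemma L_zero {x : ℝ} (hx0 : 0 < x) (hx1 : x < 1) :
    L 0 x = ∑' k : ℕ, ENNReal.ofReal (x ^ (k + 1) / ((k : ℝ) + 1) ^ (0 + 1)) := by
  have h1 : L 0 x = ∫⁻ s in Set.Icc 0 x, ENNReal.ofReal ((1 - s)⁻¹) := by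
    unfold L
    have hpre : orderedSimplexTo 1 x
        = (MeasurableEquiv.funUnique (Fin 1) ℝ) ⁻¹' (Set.Icc 0 x) := by
      rw [simplex_one]
      ext t
      simp [MeasurableEquiv.funUnique, Equiv.funUnique, Subsingleton.elim (default : Fin 1) 0]
    rw [hpre, ← (volume_preserving_funUnique (Fin 1) ℝ).setLIntegral_comp_preimage
      (f := fun s : ℝ => ENNReal.ofReal (1 - s)⁻¹) measurableSet_Icc (by fun_prop)]
    refine lintegral_congr fun t => ?_
    rw [H_zero]
    rfl
  rw [h1, ← Measure.restrict_congr_set MeasureTheory.Ioc_ae_eq_Icc, ← key_lintegral 0 hx0]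
  refine setLIntegral_congr_fun measurableSet_Ioc (fun s hs => ?_)
  have hs0 : 0 < s := hs.1
  have hs1 : s < 1 := lt_of_le_of_lt hs.2 hx1
  rw [show (1 - s)⁻¹ = ∑' k : ℕ, s ^ k from (tsum_geometric_of_lt_one hs0.le hs1).symm,
    ENNReal.ofReal_tsum_of_nonneg (fun k => pow_nonneg hs0.le k)
      (summable_geometric_of_lt_one hs0.le hs1)]
  exact tsum_congr fun k => by rw [pow_zero, div_one]

lemma L_succ (n : ℕ) {x : ℝ} (hx0 : 0 < x) (hx1 : x < 1)
    (ih : ∀ s : ℝ, 0 < s → s < 1 →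
      L n s = ∑' k : ℕ, ENNReal.ofReal (s ^ (k + 1) / ((k : ℝ) + 1) ^ (n + 1))) :
    L (n + 1) x = ∑' k : ℕ, ENNReal.ofReal (x ^ (k + 1) / ((k : ℝ) + 1) ^ (n + 2)) := by
  classical
  set e := MeasurableEquiv.piFinSuccAbove (fun _ : Fin (n + 2) => ℝ) (Fin.last (n + 1)) with he
  set B : Set (ℝ × (Fin (n + 1) → ℝ)) :=
    {p | p.1 ∈ Set.Icc (0 : ℝ) x ∧ p.2 ∈ orderedSimplexTo (n + 1) p.1} with hB
  have hBmeas : MeasurableSet B := by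
    have hsplit : B = (Prod.fst ⁻¹' Set.Icc (0 : ℝ) x)
        ∩ ((Prod.snd ⁻¹' {u : Fin (n + 1) → ℝ | Monotone u})
          ∩ ⋂ j, ({p : ℝ × (Fin (n + 1) → ℝ) | 0 ≤ p.2 j} ∩ {p | p.2 j ≤ p.1})) := by
      ext p
      simp only [hB, Set.mem_setOf_eq, Set.mem_inter_iff, Set.mem_preimage, Set.mem_iInter,
        orderedSimplexTo, Set.mem_Icc, forall_and]
    rw [hsplit]
    exact (measurable_fst measurableSet_Icc).inter
      ((measurable_snd (measurableSet_monotone _)).inter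
        (MeasurableSet.iInter fun j =>
          (measurableSet_le measurable_const (by fun_prop)).inter
          (measurableSet_le (by fun_prop) measurable_fst)))
  set F : ℝ × (Fin (n + 1) → ℝ) → ℝ≥0∞ :=
    B.indicator (fun p => ENNReal.ofReal (p.1⁻¹ * H n p.2)) with hF
  have hFmeas : Measurable F :=
    Measurable.indicator
      (((measurable_fst.inv).mul ((measurable_H n).comp measurable_snd)).ennreal_ofReal) hBmeas
  have het : ∀ t : Fin (n + 2) → ℝ,
      e t = (t (Fin.last (n + 1)), fun j => t (Fin.castSucc j)) := by
    intro t
    have h2 : (e t).2 = fun j => t (Fin.castSucc j) := by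
      funext j
      show t ((Fin.last (n + 1)).succAbove j) = _
      rw [Fin.succAbove_last]
    exact Prod.ext rfl h2
  have hpt : ∀ t : Fin (n + 2) → ℝ,
      (orderedSimplexTo (n + 2) x).indicator (fun t => ENNReal.ofReal (H (n + 1) t)) t
        = F (e t) := by
    intro t
    rw [het t]
    by_cases ht : t ∈ orderedSimplexTo (n + 2) x
    · have hmem := (mem_simplex_succ_iff t).mp ht
      rw [Set.indicator_of_mem ht, hF,
        Set.indicator_of_mem (show _ ∈ B from ⟨hmem.1, hmem.2⟩)]
      rw [H_split]
    · rw [Set.indicator_of_notMem ht, hF, Set.indicator_of_notMem]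
      intro hc
      exact ht ((mem_simplex_succ_iff t).mpr ⟨hc.1, hc.2⟩)
  have step1 : L (n + 1) x = ∫⁻ p, F p := by
    unfold L
    rw [← lintegral_indicator (measurableSet_simplex _ _)]
    calc ∫⁻ t, (orderedSimplexTo (n + 2) x).indicator
          (fun t => ENNReal.ofReal (H (n + 1) t)) t
        = ∫⁻ t, F (e t) := lintegral_congr hpt
      _ = ∫⁻ p, F p :=
        (volume_preserving_piFinSuccAbove (fun _ : Fin (n + 2) => ℝ)
          (Fin.last (n + 1))).lintegral_comp_emb e.measurableEmbedding F
  have step2 : ∫⁻ p : ℝ × (Fin (n + 1) → ℝ), F p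
      = ∫⁻ s in Set.Icc (0 : ℝ) x, ENNReal.ofReal s⁻¹ * L n s := by
    rw [Measure.volume_eq_prod, lintegral_prod F hFmeas.aemeasurable,
      ← lintegral_indicator measurableSet_Icc]
    refine lintegral_congr fun s => ?_
    by_cases hsx : s ∈ Set.Icc (0 : ℝ) x
    · rw [Set.indicator_of_mem hsx]
      have hFu : ∀ u, F (s, u)
          = (orderedSimplexTo (n + 1) s).indicator
              (fun u => ENNReal.ofReal (s⁻¹ * H n u)) u := by
        intro u
        by_cases hu : u ∈ orderedSimplexTo (n + 1) s
        · rw [hF, Set.indicator_of_mem (show (s, u) ∈ B from ⟨hsx, hu⟩),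
            Set.indicator_of_mem hu]
        · rw [hF, Set.indicator_of_notMem (fun hc => hu hc.2), Set.indicator_of_notMem hu]
      simp_rw [hFu]
      rw [lintegral_indicator (measurableSet_simplex _ _)]
      have hmul : ∀ u, ENNReal.ofReal (s⁻¹ * H n u)
          = ENNReal.ofReal s⁻¹ * ENNReal.ofReal (H n u) :=
        fun u => ENNReal.ofReal_mul (inv_nonneg.mpr hsx.1)
      simp_rw [hmul]
      rw [lintegral_const_mul' _ _ ENNReal.ofReal_ne_top]
      rfl
    · rw [Set.indicator_of_notMem hsx]
      have hFu : ∀ u, F (s, u) = 0 :=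
        fun u => Set.indicator_of_notMem (fun hc => hsx hc.1) _
      simp_rw [hFu]
      exact lintegral_zero
  rw [step1, step2, ← Measure.restrict_congr_set MeasureTheory.Ioc_ae_eq_Icc,
    ← key_lintegral (n + 1) hx0]
  refine setLIntegral_congr_fun measurableSet_Ioc (fun s hs => ?_)
  have hs0 : 0 < s := hs.1
  have hs1 : s < 1 := lt_of_le_of_lt hs.2 hx1
  rw [ih s hs0 hs1, ← ENNReal.tsum_mul_left]
  refine tsum_congr fun k => ?_
  rw [← ENNReal.ofReal_mul (inv_nonneg.mpr hs0.le)]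
  congr 1
  have hks : s ≠ 0 := hs0.ne'
  have hk1 : ((k : ℝ) + 1) ^ (n + 1) ≠ 0 := by positivity
  field_simp
  ring

lemma L_eq (n : ℕ) : ∀ x : ℝ, 0 < x → x < 1 →
    L n x = ∑' k : ℕ, ENNReal.ofReal (x ^ (k + 1) / ((k : ℝ) + 1) ^ (n + 1)) := by
  induction n with
  | zero => exact fun x hx0 hx1 => L_zero hx0 hx1
  | succ m ih => exact fun x hx0 hx1 => L_succ m hx0 hx1 fun s hs0 hs1 => ih s hs0 hs1

end PolylogAux

/-- For every integer `n ≥ 1` and every real `0 < x < 1`, the integral of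
`(t₁,…,t_n) ↦ (1/(1−t₁))·∏_{i=2}^{n}(1/t_i)` over the ordered simplex
`{0 ≤ t₁ ≤ ⋯ ≤ t_n ≤ x}` equals the convergent series
`∑_{k=1}^{∞} x^k / k^n` (the classical polylogarithm `Li_n(x)`). -/
theorem polylog_as_iterated_integral (n : ℕ) (hn : 1 ≤ n) (x : ℝ)
    (hx0 : 0 < x) (hx1 : x < 1) :
    HasSum (fun k : ℕ => (x : ℂ) ^ (k + 1) / ((k : ℂ) + 1) ^ n)
      (∫ t in orderedSimplexTo n x,
        (1 - (t ⟨0, by omega⟩ : ℂ))⁻¹ *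
          ∏ i ∈ Finset.univ.erase (⟨0, by omega⟩ : Fin n), ((t i : ℂ))⁻¹) := by
  obtain ⟨m, rfl⟩ : ∃ m, n = m + 1 := ⟨n - 1, by omega⟩
  have hsummable : Summable (fun k : ℕ => x ^ (k + 1) / ((k : ℝ) + 1) ^ (m + 1)) := by
    refine Summable.of_nonneg_of_le (f := fun k : ℕ => x ^ (k + 1))
      (fun k => by positivity) (fun k => ?_) ?_
    · exact div_le_self (by positivity)
        (one_le_pow₀ (by linarith [Nat.cast_nonneg (α := ℝ) k]))
    · have h := (summable_geometric_of_lt_one hx0.le hx1).mul_left x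
      exact h.congr fun k => (pow_succ' x k).symm
  have hnn : 0 ≤ᵐ[volume.restrict (orderedSimplexTo (m + 1) x)] PolylogAux.H m := by
    filter_upwards [ae_restrict_mem (PolylogAux.measurableSet_simplex (m + 1) x)] with t ht
    obtain ⟨-, hmem⟩ := ht
    have h0 : (0 : ℝ) ≤ (1 - t 0)⁻¹ := inv_nonneg.mpr (by linarith [(hmem 0).2])
    exact mul_nonneg h0 (Finset.prod_nonneg fun i _ => inv_nonneg.mpr (hmem i).1)
  have hint : (∫ t in orderedSimplexTo (m + 1) x, PolylogAux.H m t)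
      = ∑' k : ℕ, x ^ (k + 1) / ((k : ℝ) + 1) ^ (m + 1) := by
    rw [MeasureTheory.integral_eq_lintegral_of_nonneg_ae hnn
      (PolylogAux.measurable_H m).aestronglyMeasurable]
    rw [show (∫⁻ t in orderedSimplexTo (m + 1) x, ENNReal.ofReal (PolylogAux.H m t))
        = PolylogAux.L m x from rfl]
    rw [PolylogAux.L_eq m x hx0 hx1,
      ENNReal.tsum_toReal_eq (fun k => ENNReal.ofReal_ne_top)]
    exact tsum_congr fun k => ENNReal.toReal_ofReal (by positivity)
  have hreal : HasSum (fun k : ℕ => x ^ (k + 1) / ((k : ℝ) + 1) ^ (m + 1))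
      (∫ t in orderedSimplexTo (m + 1) x, PolylogAux.H m t) := by
    rw [hint]; exact hsummable.hasSum
  have hfun : (fun t : Fin (m + 1) → ℝ =>
      (1 - (t ⟨0, by omega⟩ : ℂ))⁻¹
        * ∏ i ∈ Finset.univ.erase (⟨0, by omega⟩ : Fin (m + 1)), ((t i : ℂ))⁻¹)
      = fun t => ((PolylogAux.H m t : ℝ) : ℂ) := by
    funext t
    simp only [PolylogAux.H, Fin.zero_eta]
    push_cast
    ring
  have hterm : (fun k : ℕ => (x : ℂ) ^ (k + 1) / ((k : ℂ) + 1) ^ (m + 1))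
      = fun k : ℕ => ((x ^ (k + 1) / ((k : ℝ) + 1) ^ (m + 1) : ℝ) : ℂ) := by
    funext k; push_cast; ring
  rw [hterm, hfun]
  have hco : (∫ t in orderedSimplexTo (m + 1) x, ((PolylogAux.H m t : ℝ) : ℂ))
      = ((∫ t in orderedSimplexTo (m + 1) x, PolylogAux.H m t : ℝ) : ℂ) := integral_ofReal
  rw [hco]
  exact Complex.hasSum_ofReal.mpr hreal
end

section
/- Let r ≥ 1, let g₁,…,g_r : [0,1] → ℂ be continuous, and let 0 ≤ b ≤ 1. Then the integral of g₁(t₁)⋯g_r(t_r) over the simplex {0 ≤ t₁ ≤ ⋯ ≤ t_r ≤ 1} equals the sum over k = 0,…,r of the product of the integral of g₁(t₁)⋯g_k(t_k) over {0 ≤ t₁ ≤ ⋯ ≤ t_k ≤ b} with the integral of g_{k+1}(t_{k+1})⋯g_r(t_r) over {b ≤ t_{k+1} ≤ ⋯ ≤ t_r ≤ 1} (Chen's path-composition formula). -/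
open MeasureTheory

/-- The ordered simplex `{a ≤ t₁ ≤ ⋯ ≤ t_r ≤ b} ⊆ ℝʳ`. -/
def orderedSimplexIcc (r : ℕ) (a b : ℝ) : Set (Fin r → ℝ) :=
  {t | Monotone t ∧ ∀ i, t i ∈ Set.Icc a b}

namespace ChenAux

/-- The splitting measurable equivalence `ℝᵏ × ℝᵐ ≃ ℝʳ` when `k + m = r`. -/
noncomputable def splitEquiv (k m r : ℕ) (h : k + m = r) :
    ((Fin k → ℝ) × (Fin m → ℝ)) ≃ᵐ (Fin r → ℝ) :=
  (MeasurableEquiv.sumPiEquivProdPi (fun _ : Fin k ⊕ Fin m => ℝ)).symm.trans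
    (MeasurableEquiv.piCongrLeft (fun _ => ℝ) (finSumFinEquiv.trans (finCongr h)))

lemma splitEquiv_mp (k m r : ℕ) (h : k + m = r) :
    MeasurePreserving (splitEquiv k m r h) volume volume := by
  have := (volume_measurePreserving_piCongrLeft (fun _ : Fin r => ℝ)
      (finSumFinEquiv.trans (finCongr h))).comp
    (volume_measurePreserving_sumPiEquivProdPi_symm (fun _ : Fin k ⊕ Fin m => ℝ))
  simpa [splitEquiv, MeasurableEquiv.coe_trans] using this

lemma splitEquiv_apply (k m r : ℕ) (h : k + m = r) (u : Fin k → ℝ) (v : Fin m → ℝ)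
    (i : Fin r) :
    splitEquiv k m r h (u, v) i =
      if hi : (i : ℕ) < k then u ⟨i, hi⟩ else v ⟨(i : ℕ) - k, by omega⟩ := by
  set e : Fin k ⊕ Fin m ≃ Fin r := finSumFinEquiv.trans (finCongr h) with he
  have key : ∀ s : Fin k ⊕ Fin m, splitEquiv k m r h (u, v) (e s) = Sum.elim u v s := by
    intro s
    show (MeasurableEquiv.piCongrLeft (fun _ => ℝ) e)
      ((MeasurableEquiv.sumPiEquivProdPi (fun _ : Fin k ⊕ Fin m => ℝ)).symm (u, v)) (e s)
      = Sum.elim u v s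
    rw [MeasurableEquiv.piCongrLeft_apply_apply]
    cases s <;> rfl
  by_cases hi : (i : ℕ) < k
  · rw [dif_pos hi]
    have : i = e (Sum.inl ⟨i, hi⟩) := by
      apply Fin.ext
      simp [he, finSumFinEquiv]
    conv_lhs => rw [this, key]
    rfl
  · rw [dif_neg hi]
    have : i = e (Sum.inr ⟨(i : ℕ) - k, by omega⟩) := by
      apply Fin.ext
      simp [he, finSumFinEquiv]
      omega
    conv_lhs => rw [this, key]
    rfl

/-- The piece of the simplex where the first `k` coordinates are `≤ b` and the
rest are `≥ b`. -/
def Sset (r : ℕ) (b : ℝ) (k : ℕ) : Set (Fin r → ℝ) :=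
  {t | Monotone t ∧ (∀ i, t i ∈ Set.Icc (0 : ℝ) 1) ∧
    ∀ i : Fin r, ((i : ℕ) < k → t i ≤ b) ∧ (k ≤ (i : ℕ) → b ≤ t i)}

lemma preimage_Sset (k m r : ℕ) (h : k + m = r) (b : ℝ) (hb0 : 0 ≤ b) (hb1 : b ≤ 1) :
    splitEquiv k m r h ⁻¹' Sset r b k =
      orderedSimplexIcc k 0 b ×ˢ orderedSimplexIcc m b 1 := by
  ext ⟨u, v⟩
  set t := splitEquiv k m r h (u, v) with ht
  have hval : ∀ (i : Fin r) (hi : (i : ℕ) < k), t i = u ⟨i, hi⟩ := by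
    intro i hi
    rw [ht, splitEquiv_apply, dif_pos hi]
  have hval2 : ∀ (i : Fin r) (hi : k ≤ (i : ℕ)), t i = v ⟨(i : ℕ) - k, by omega⟩ := by
    intro i hi
    rw [ht, splitEquiv_apply, dif_neg (Nat.not_lt.2 hi)]
  simp only [Set.mem_preimage, Set.mem_prod, Sset, orderedSimplexIcc, Set.mem_setOf_eq, ← ht]
  constructor
  · rintro ⟨hmono, hIcc, hsplit⟩
    refine ⟨⟨?_, ?_⟩, ?_, ?_⟩
    · intro i j hij
      have e1 : t ⟨(i : ℕ), by omega⟩ = u i := hval _ i.isLt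
      have e2 : t ⟨(j : ℕ), by omega⟩ = u j := hval _ j.isLt
      rw [← e1, ← e2]
      exact hmono (Fin.mk_le_mk.2 hij)
    · intro i
      have e1 : t ⟨(i : ℕ), by omega⟩ = u i := hval _ i.isLt
      refine ⟨?_, ?_⟩
      · rw [← e1]; exact (hIcc _).1
      · rw [← e1]; exact (hsplit ⟨(i : ℕ), by omega⟩).1 i.isLt
    · intro i j hij
      have e1 : t ⟨k + (i : ℕ), by have := i.isLt; omega⟩ = v i := by
        rw [hval2 _ (Nat.le_add_right _ _)]
        congr 1
        apply Fin.ext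
        simp
      have e2 : t ⟨k + (j : ℕ), by have := j.isLt; omega⟩ = v j := by
        rw [hval2 _ (Nat.le_add_right _ _)]
        congr 1
        apply Fin.ext
        simp
      rw [← e1, ← e2]
      exact hmono (Fin.mk_le_mk.2 (by simpa using hij))
    · intro i
      have e1 : t ⟨k + (i : ℕ), by have := i.isLt; omega⟩ = v i := by
        rw [hval2 _ (Nat.le_add_right _ _)]
        congr 1
        apply Fin.ext
        simp
      refine ⟨?_, ?_⟩
      · rw [← e1]; exact (hsplit _).2 (Nat.le_add_right _ _)
      · rw [← e1]; exact (hIcc _).2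
  · rintro ⟨⟨humono, huIcc⟩, hvmono, hvIcc⟩
    refine ⟨?_, ?_, ?_⟩
    · intro i j hij
      rcases Nat.lt_or_ge (i : ℕ) k with hi | hi
      · rcases Nat.lt_or_ge (j : ℕ) k with hj | hj
        · rw [hval i hi, hval j hj]
          exact humono (Fin.mk_le_mk.2 hij)
        · rw [hval i hi, hval2 j hj]
          exact le_trans (huIcc _).2 (hvIcc _).1
      · have hj : k ≤ (j : ℕ) := le_trans hi hij
        rw [hval2 i hi, hval2 j hj]
        exact hvmono (Fin.mk_le_mk.2 (by omega))
    · intro i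
      rcases Nat.lt_or_ge (i : ℕ) k with hi | hi
      · rw [hval i hi]
        exact ⟨(huIcc _).1, le_trans (huIcc _).2 hb1⟩
      · rw [hval2 i hi]
        exact ⟨le_trans hb0 (hvIcc _).1, (hvIcc _).2⟩
    · intro i
      refine ⟨fun hi => ?_, fun hi => ?_⟩
      · rw [hval i hi]; exact (huIcc _).2
      · rw [hval2 i hi]; exact (hvIcc _).1

lemma prod_split (k m r : ℕ) (h : k + m = r) (g : Fin r → ℝ → ℂ)
    (u : Fin k → ℝ) (v : Fin m → ℝ) :
    (∏ i, g i (splitEquiv k m r h (u, v) i)) =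
      (∏ i : Fin k, g ⟨i, by have := i.isLt; omega⟩ (u i)) *
      (∏ i : Fin m, g ⟨k + i, by have := i.isLt; omega⟩ (v i)) := by
  rw [← Equiv.prod_comp (finSumFinEquiv.trans (finCongr h))
    (fun j => g j (splitEquiv k m r h (u, v) j)), Fintype.prod_sum_type]
  congr 1
  · refine Finset.prod_congr rfl fun i _ => ?_
    have he : (finSumFinEquiv.trans (finCongr h)) (Sum.inl i) =
        ⟨(i : ℕ), by have := i.isLt; omega⟩ := by
      apply Fin.ext; simp
    rw [he, splitEquiv_apply, dif_pos i.isLt]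
  · refine Finset.prod_congr rfl fun i _ => ?_
    have he : (finSumFinEquiv.trans (finCongr h)) (Sum.inr i) =
        ⟨k + (i : ℕ), by have := i.isLt; omega⟩ := by
      apply Fin.ext; simp
    rw [he, splitEquiv_apply,
      dif_neg (by exact Nat.not_lt.2 (Nat.le_add_right k (i : ℕ)))]
    simp only [Nat.add_sub_cancel_left]

lemma integral_Sset (k m r : ℕ) (h : k + m = r) (b : ℝ) (hb0 : 0 ≤ b) (hb1 : b ≤ 1)
    (g : Fin r → ℝ → ℂ) :
    (∫ t in Sset r b k, ∏ i, g i (t i)) =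
      (∫ u in orderedSimplexIcc k 0 b,
          ∏ i : Fin k, g ⟨i, by have := i.isLt; omega⟩ (u i)) *
      (∫ v in orderedSimplexIcc m b 1,
          ∏ i : Fin m, g ⟨k + i, by have := i.isLt; omega⟩ (v i)) := by
  rw [← (splitEquiv_mp k m r h).setIntegral_preimage_emb
    (splitEquiv k m r h).measurableEmbedding (fun t => ∏ i, g i (t i)) (Sset r b k),
    preimage_Sset k m r h b hb0 hb1]
  have hps : ∀ p : (Fin k → ℝ) × (Fin m → ℝ),
      (∏ i, g i (splitEquiv k m r h p i)) =
        (∏ i : Fin k, g ⟨i, by have := i.isLt; omega⟩ (p.1 i)) *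
        (∏ i : Fin m, g ⟨k + i, by have := i.isLt; omega⟩ (p.2 i)) := by
    rintro ⟨u, v⟩
    exact prod_split k m r h g u v
  simp only [hps]
  rw [Measure.volume_eq_prod]
  exact setIntegral_prod_mul
    (fun u : Fin k → ℝ => ∏ i : Fin k, g ⟨i, by have := i.isLt; omega⟩ (u i))
    (fun v : Fin m → ℝ => ∏ i : Fin m, g ⟨k + i, by have := i.isLt; omega⟩ (v i)) _ _

lemma isClosed_monotone (r : ℕ) : IsClosed {t : Fin r → ℝ | Monotone t} := by
  have : {t : Fin r → ℝ | Monotone t} =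
      ⋂ (i : Fin r) (j : Fin r) (_ : i ≤ j), {t : Fin r → ℝ | t i ≤ t j} := by
    ext t
    simp only [Set.mem_setOf_eq, Set.mem_iInter]
    exact ⟨fun h i j hij => h hij, fun h i j hij => h i j hij⟩
  rw [this]
  exact isClosed_iInter fun i => isClosed_iInter fun j => isClosed_iInter fun _ =>
    isClosed_le (continuous_apply i) (continuous_apply j)

lemma isClosed_Sset (r k : ℕ) (b : ℝ) : IsClosed (Sset r b k) := by
  have : Sset r b k = {t : Fin r → ℝ | Monotone t} ∩
      ((⋂ i : Fin r, (fun t : Fin r → ℝ => t i) ⁻¹' Set.Icc (0 : ℝ) 1) ∩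
       ((⋂ (i : Fin r) (_ : (i : ℕ) < k), {t : Fin r → ℝ | t i ≤ b}) ∩
        (⋂ (i : Fin r) (_ : k ≤ (i : ℕ)), {t : Fin r → ℝ | b ≤ t i}))) := by
    ext t
    simp only [Sset, Set.mem_setOf_eq, Set.mem_inter_iff, Set.mem_iInter, Set.mem_preimage]
    constructor
    · rintro ⟨h1, h2, h3⟩
      exact ⟨h1, h2, fun i hi => (h3 i).1 hi, fun i hi => (h3 i).2 hi⟩
    · rintro ⟨h1, h2, h3, h4⟩
      exact ⟨h1, h2, fun i => ⟨h3 i, h4 i⟩⟩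
  rw [this]
  refine (isClosed_monotone r).inter (IsClosed.inter ?_ (IsClosed.inter ?_ ?_))
  · exact isClosed_iInter fun i => isClosed_Icc.preimage (continuous_apply i)
  · exact isClosed_iInter fun i => isClosed_iInter fun _ =>
      isClosed_le (continuous_apply i) continuous_const
  · exact isClosed_iInter fun i => isClosed_iInter fun _ =>
      isClosed_le continuous_const (continuous_apply i)

lemma isClosed_orderedSimplexIcc (r : ℕ) (a c : ℝ) : IsClosed (orderedSimplexIcc r a c) := by
  have : orderedSimplexIcc r a c = {t : Fin r → ℝ | Monotone t} ∩
      ⋂ i : Fin r, (fun t : Fin r → ℝ => t i) ⁻¹' Set.Icc a c := by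
    ext t
    simp only [orderedSimplexIcc, Set.mem_setOf_eq, Set.mem_inter_iff, Set.mem_iInter,
      Set.mem_preimage]
  rw [this]
  exact (isClosed_monotone r).inter
    (isClosed_iInter fun i => isClosed_Icc.preimage (continuous_apply i))

end ChenAux

/-- Chen's path-composition formula: for continuous `g₁,…,g_r : [0,1] → ℂ`
and `0 ≤ b ≤ 1`, the integral of `g₁(t₁)⋯g_r(t_r)` over
`{0 ≤ t₁ ≤ ⋯ ≤ t_r ≤ 1}` equals the sum over `k = 0,…,r` of the product of
the integral of `g₁(t₁)⋯g_k(t_k)` over `{0 ≤ t₁ ≤ ⋯ ≤ t_k ≤ b}` with the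
integral of `g_{k+1}(t_{k+1})⋯g_r(t_r)` over `{b ≤ t_{k+1} ≤ ⋯ ≤ t_r ≤ 1}`. -/
theorem iteratedIntegral_comp (r : ℕ) (hr : 1 ≤ r) (g : Fin r → ℝ → ℂ)
    (hg : ∀ i, ContinuousOn (g i) (Set.Icc (0 : ℝ) 1))
    (b : ℝ) (hb0 : 0 ≤ b) (hb1 : b ≤ 1) :
    (∫ t in orderedSimplexIcc r 0 1, ∏ i, g i (t i)) =
      ∑ k : Fin (r + 1),
        (∫ t in orderedSimplexIcc (k : ℕ) 0 b,
            ∏ i : Fin (k : ℕ), g (Fin.castLE k.is_le i) (t i)) *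
        (∫ t in orderedSimplexIcc (r - (k : ℕ)) b 1,
            ∏ i : Fin (r - (k : ℕ)),
              g ⟨(k : ℕ) + (i : ℕ), by have := i.isLt; have := k.is_le; omega⟩
                (t i)) := by
  classical
  set S : Fin (r + 1) → Set (Fin r → ℝ) := fun k => ChenAux.Sset r b (k : ℕ) with hS
  have hmeas : ∀ k, MeasurableSet (S k) := fun k =>
    (ChenAux.isClosed_Sset r (k : ℕ) b).measurableSet
  have hU : (⋃ k, S k) = orderedSimplexIcc r 0 1 := by
    ext t
    simp only [Set.mem_iUnion, hS, ChenAux.Sset, Set.mem_setOf_eq, orderedSimplexIcc]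
    constructor
    · rintro ⟨k, h1, h2, _⟩
      exact ⟨h1, h2⟩
    · rintro ⟨hmono, hIcc⟩
      set K := (Finset.univ.filter fun i : Fin r => t i < b).card with hK
      have hKr : K ≤ r := le_trans (Finset.card_filter_le _ _) (by simp)
      refine ⟨⟨K, by omega⟩, hmono, hIcc, fun i => ⟨fun hi => ?_, fun hi => ?_⟩⟩
      · by_contra hbi
        push_neg at hbi
        have hsub : (Finset.univ.filter fun j : Fin r => t j < b) ⊆ Finset.Iio i := by
          intro j hj
          simp only [Finset.mem_filter, Finset.mem_univ, true_and] at hj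
          rw [Finset.mem_Iio]
          by_contra hji
          push_neg at hji
          exact absurd (hmono hji) (not_le.2 (lt_of_lt_of_le hj (le_of_lt hbi)))
        have hcard := Finset.card_le_card hsub
        rw [Fin.card_Iio] at hcard
        simp only [Fin.val_mk] at hi
        omega
      · by_contra hbi
        push_neg at hbi
        have hsub : Finset.Iic i ⊆ Finset.univ.filter fun j : Fin r => t j < b := by
          intro j hj
          rw [Finset.mem_Iic] at hj
          simp only [Finset.mem_filter, Finset.mem_univ, true_and]
          exact lt_of_le_of_lt (hmono hj) hbi
        have hcard := Finset.card_le_card hsub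
        rw [Fin.card_Iic] at hcard
        simp only [Fin.val_mk] at hi
        omega
  have hdisj : Pairwise (Function.onFun (AEDisjoint volume) S) := by
    have key : ∀ k l : Fin (r + 1), (k : ℕ) < (l : ℕ) → volume (S k ∩ S l) = 0 := by
      intro k l hkl
      have hi : (k : ℕ) < r := by have := l.is_le; omega
      refine measure_mono_null (t := {t : Fin r → ℝ | t ⟨(k : ℕ), hi⟩ = b}) ?_ ?_
      · rintro t ⟨⟨_, _, h1⟩, _, _, h2⟩
        have a1 := (h1 ⟨(k : ℕ), hi⟩).2 (le_refl _)
        have a2 := (h2 ⟨(k : ℕ), hi⟩).1 hkl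
        exact le_antisymm a2 a1
      · rw [volume_pi]
        exact Measure.pi_hyperplane (fun _ : Fin r => (volume : Measure ℝ))
          (⟨(k : ℕ), hi⟩ : Fin r) b
    intro k l hkl
    rcases hkl.lt_or_gt with h | h
    · exact key k l h
    · exact AEDisjoint.symm (key l k h)
  have hint : IntegrableOn (fun t : Fin r → ℝ => ∏ i, g i (t i))
      (orderedSimplexIcc r 0 1) volume := by
    have hQ : IsCompact (Set.pi Set.univ fun _ : Fin r => Set.Icc (0 : ℝ) 1) :=
      isCompact_univ_pi fun _ => isCompact_Icc
    have hsub : orderedSimplexIcc r 0 1 ⊆ Set.pi Set.univ fun _ => Set.Icc (0 : ℝ) 1 :=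
      fun t ht i _ => ht.2 i
    have hcpt : IsCompact (orderedSimplexIcc r 0 1) :=
      hQ.of_isClosed_subset (ChenAux.isClosed_orderedSimplexIcc r 0 1) hsub
    have hcont : ContinuousOn (fun t : Fin r → ℝ => ∏ i, g i (t i))
        (orderedSimplexIcc r 0 1) := by
      apply continuousOn_finset_prod
      intro i _
      exact (hg i).comp (continuous_apply i).continuousOn fun t ht => ht.2 i
    exact hcont.integrableOn_compact hcpt
  rw [← hU] at hint ⊢
  rw [integral_iUnion_ae (fun k => (hmeas k).nullMeasurableSet) hdisj hint, tsum_fintype]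
  refine Finset.sum_congr rfl fun k _ => ?_
  have hk : (k : ℕ) + (r - (k : ℕ)) = r := by have := k.is_le; omega
  exact ChenAux.integral_Sset (k : ℕ) (r - (k : ℕ)) r hk b hb0 hb1 g
end
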